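/- Let Δ, d, k be positive integers with (d+1)k ≥ Δ + 1, let G be a graph with maximum degree at most Δ, and let uv be an edge of G. If G − uv has an equitable d-degenerate k-colouring but G does not, then G has a near-equitable d-degenerate k-colouring. -/

import Mathlib

open Finset

attribute [local instance] Classical.propDecidable

variable {V : Type*} [Fintype V] [DecidableEq V]

/-- The subgraph of `G` induced on the vertex set `S` is `d`-degenerate: every nonempty
subset of `S` contains a vertex having at most `d` neighbours inside that subset. -/
def DegenOn (G : SimpleGraph V) (d : ℕ) (S : Finset V) : Prop :=
  ∀ s : Finset V, s ⊆ S → s.Nonempty → ∃ v ∈ s, (s.filter (fun u => G.Adj v u)).card ≤ d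

/-- The colour class of colour `i` under the colouring `f`. -/
def cls {k : ℕ} (f : V → Fin k) (i : Fin k) : Finset V :=
  Finset.univ.filter (fun v => f v = i)

/-- `f` is a `d`-degenerate `k`-colouring of `G`: each colour class induces a
`d`-degenerate subgraph. -/
def IsDegenColoring (G : SimpleGraph V) (d : ℕ) {k : ℕ} (f : V → Fin k) : Prop :=
  ∀ i, DegenOn G d (cls f i)

/-- `f` is an equitable colouring: any two colour classes differ in size by at most one. -/
def IsEquitable {k : ℕ} (f : V → Fin k) : Prop :=
  ∀ i j, (cls f i).card ≤ (cls f j).card + 1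

/-- `f` is a near-equitable `k`-colouring of an `n`-vertex graph (conditions (E1),(E2)):
with the colour classes sorted by size, `⌊n/k⌋ − 1 ≤ |C_1| ≤ ⌊n/k⌋ ≤ |C_2| ≤ … ≤
|C_{k−1}| ≤ ⌈n/k⌉ ≤ |C_k| ≤ ⌈n/k⌉ + 1`, and `2 ≤ |C_k| − |C_1| ≤ 3`.  Stated label-free:
all class sizes lie in `[⌊n/k⌋ − 1, ⌈n/k⌉ + 1]`, at most one class is smaller than
`⌊n/k⌋`, at most one class is larger than `⌈n/k⌉`, some class has size `≤ ⌊n/k⌋`, some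
class has size `≥ ⌈n/k⌉`, and the largest class exceeds the smallest by at least `2` and
at most `3`.  (Here `⌈n/k⌉ = (n + k - 1) / k` in natural division.) -/
def NearEquitable (n : ℕ) {k : ℕ} (f : V → Fin k) : Prop :=
  (∀ i, n / k - 1 ≤ (cls f i).card ∧ (cls f i).card ≤ (n + k - 1) / k + 1) ∧
  (Finset.univ.filter (fun i => (cls f i).card < n / k)).card ≤ 1 ∧
  (Finset.univ.filter (fun i => (n + k - 1) / k < (cls f i).card)).card ≤ 1 ∧
  (∃ i, (cls f i).card ≤ n / k) ∧
  (∃ i, (n + k - 1) / k ≤ (cls f i).card) ∧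
  (∃ i j, (cls f i).card + 2 ≤ (cls f j).card) ∧
  (∀ i j, (cls f j).card ≤ (cls f i).card + 3)

/-- The vertex `v` is movable to the colour class of colour `j`: `v` has a different
colour, and adding `v` to that class keeps it `d`-degenerate. -/
def Movable (G : SimpleGraph V) (d : ℕ) {k : ℕ} (f : V → Fin k) (v : V) (j : Fin k) :
    Prop :=
  f v ≠ j ∧ DegenOn G d (insert v (cls f j))

/-- Arc of the auxiliary digraph `D`: there is an arc from colour `i` to colour `j`
(`i ≠ j`) iff some vertex of class `i` is movable to class `j`. -/
def MvArc (G : SimpleGraph V) (d : ℕ) {k : ℕ} (f : V → Fin k) (i j : Fin k) : Prop :=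
  i ≠ j ∧ ∃ v, f v = i ∧ Movable G d f v j

/-- Class `i` is accessible to class `j`: `D` has a (possibly trivial) directed path from
`i` to `j`. -/
def AccTo (G : SimpleGraph V) (d : ℕ) {k : ℕ} (f : V → Fin k) : Fin k → Fin k → Prop :=
  Relation.ReflTransGen (MvArc G d f)

/-- Accessibility within the subdigraph of `D` induced on the set `S` of colours. -/
def AccToWithin (G : SimpleGraph V) (d : ℕ) {k : ℕ} (f : V → Fin k)
    (S : Finset (Fin k)) : Fin k → Fin k → Prop :=
  Relation.ReflTransGen (fun i j => i ∈ S ∧ j ∈ S ∧ MvArc G d f i j)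

/-- Class `i` has minimum size among all colour classes. -/
def IsMinClass {k : ℕ} (f : V → Fin k) (i : Fin k) : Prop :=
  ∀ j, (cls f i).card ≤ (cls f j).card

/-- Class `i` is accessible: it is accessible to some colour class of minimum size. -/
def Accessible (G : SimpleGraph V) (d : ℕ) {k : ℕ} (f : V → Fin k) (i : Fin k) : Prop :=
  ∃ j, IsMinClass f j ∧ AccTo G d f i j

/-- `𝒜`: the set of accessible colours. -/
noncomputable def Aset (G : SimpleGraph V) (d : ℕ) {k : ℕ} (f : V → Fin k) :
    Finset (Fin k) :=
  Finset.univ.filter (fun i => Accessible G d f i)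

/-- `ℬ`: the set of non-accessible colours. -/
noncomputable def Bset (G : SimpleGraph V) (d : ℕ) {k : ℕ} (f : V → Fin k) :
    Finset (Fin k) :=
  Finset.univ.filter (fun i => ¬ Accessible G d f i)

/-- `A`: the union of the accessible colour classes. -/
noncomputable def Averts (G : SimpleGraph V) (d : ℕ) {k : ℕ} (f : V → Fin k) : Finset V :=
  Finset.univ.filter (fun v => Accessible G d f (f v))

/-- `B`: the union of the non-accessible colour classes. -/
noncomputable def Bverts (G : SimpleGraph V) (d : ℕ) {k : ℕ} (f : V → Fin k) : Finset V :=
  Finset.univ.filter (fun v => ¬ Accessible G d f (f v))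

/-- The colours used by the subdigraphs `D_1, …, D_{i-1}` preceding `D_i`. -/
def UsedBefore {k q : ℕ} (𝒟 : Fin q → Finset (Fin k)) (i : Fin q) : Finset (Fin k) :=
  (Finset.univ.filter (fun i' => i' < i)).biUnion 𝒟

/-- `(𝒟, trm)` is the decomposition `D_1, …, D_q` of `𝒜` with terminals
`trm 1, …, trm q`: at each step `i`, `trm i` is the smallest-index minimum-size colour
class not yet used (here "smallest index" is the smallest colour, the classes being
labelled in non-decreasing order of size), `D_i` consists of the unused accessible classes
accessible to `trm i`, the process exhausts all minimum-size classes, and every accessible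
class belongs to some `D_i`. -/
def IsDecomp (G : SimpleGraph V) (d : ℕ) {k : ℕ} (f : V → Fin k) {q : ℕ}
    (𝒟 : Fin q → Finset (Fin k)) (trm : Fin q → Fin k) : Prop :=
  (∀ i : Fin q,
      IsMinClass f (trm i) ∧
      trm i ∉ UsedBefore 𝒟 i ∧
      (∀ j, IsMinClass f j → j ∉ UsedBefore 𝒟 i → trm i ≤ j) ∧
      (∀ u, u ∈ 𝒟 i ↔
        Accessible G d f u ∧ u ∉ UsedBefore 𝒟 i ∧ AccTo G d f u (trm i))) ∧
  (∀ j, IsMinClass f j → ∃ i, j ∈ 𝒟 i) ∧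
  (∀ u, Accessible G d f u → ∃ i, u ∈ 𝒟 i)

/-- `𝒯` for the choice `U` of removed class: the classes of `D_- − U` (here `Dl` is the
vertex set of `D_-` and `Cm` its terminal `C_-`) that are non-accessible to `C_-` in
`D_- − U`. -/
noncomputable def TSet (G : SimpleGraph V) (d : ℕ) {k : ℕ} (f : V → Fin k)
    (Dl : Finset (Fin k)) (Cm U : Fin k) : Finset (Fin k) :=
  (Dl.erase U).filter (fun W => ¬ AccToWithin G d f (Dl.erase U) W Cm)

/-- `U` is a valid choice of `U_-`: it belongs to `D_-` and minimises the number of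
classes of `D_- − U` that are non-accessible to `C_-` there. -/
def IsUminus (G : SimpleGraph V) (d : ℕ) {k : ℕ} (f : V → Fin k)
    (Dl : Finset (Fin k)) (Cm U : Fin k) : Prop :=
  U ∈ Dl ∧ ∀ U' ∈ Dl, (TSet G d f Dl Cm U).card ≤ (TSet G d f Dl Cm U').card

/-- `e` is a degeneracy ordering of the induced subgraph `G[S]` for the parameter `d`. -/
def IsDegOrdOn (G : SimpleGraph V) (d : ℕ) (S : Finset V)
    (e : Fin S.card ≃ {x // x ∈ S}) : Prop :=
  ∀ i, (Finset.univ.filter (fun j => j < i ∧ G.Adj (e i : V) (e j : V))).card ≤ d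

/-- The parameter `p` of a degeneracy ordering of `G[S]`: the largest (1-based) index
whose vertex has exactly `d` earlier neighbours (`0` if none). -/
noncomputable def ordPOn (G : SimpleGraph V) (d : ℕ) (S : Finset V)
    (e : Fin S.card ≃ {x // x ∈ S}) : ℕ :=
  (Finset.univ.filter (fun i =>
    (Finset.univ.filter (fun j => j < i ∧ G.Adj (e i : V) (e j : V))).card = d)).sup
      (fun i => (i : ℕ) + 1)

/-- `p(G[S])`: the minimum of `ordPOn` over all degeneracy orderings of `G[S]`. -/
noncomputable def pMinOn (G : SimpleGraph V) (d : ℕ) (S : Finset V) : ℕ :=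
  sInf {p | ∃ e : Fin S.card ≃ {x // x ∈ S}, IsDegOrdOn G d S e ∧ ordPOn G d S e = p}

/-- `V*` of the ordering `e` of `G[S]`: the set of its first `ordPOn G d S e` vertices. -/
noncomputable def VstarOf (G : SimpleGraph V) (d : ℕ) (S : Finset V)
    (e : Fin S.card ≃ {x // x ∈ S}) : Finset V :=
  (Finset.univ.filter (fun i : Fin S.card => (i : ℕ) < ordPOn G d S e)).image
    (fun i => (e i : V))

/-- The size of the largest colour class, `|C_k|`. -/
def maxS {k : ℕ} (f : V → Fin k) : ℕ := Finset.univ.sup (fun i => (cls f i).card)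

/-- The size of the smallest colour class, `|C_1|`. -/
noncomputable def minS {k : ℕ} (f : V → Fin k) : ℕ := sInf {m | ∃ i, (cls f i).card = m}

/-- `Σ_{V ∈ 𝒯} |V*| = Σ_{V ∈ 𝒯} p(G[V])`. -/
noncomputable def sumT (G : SimpleGraph V) (d : ℕ) {k : ℕ} (f : V → Fin k)
    (𝒯 : Finset (Fin k)) : ℕ :=
  ∑ i ∈ 𝒯, pMinOn G d (cls f i)

/-- Lexicographic comparison of triples of naturals. -/
def Lex3Le (x y : ℕ × ℕ × ℕ) : Prop :=
  x.1 < y.1 ∨ (x.1 = y.1 ∧ (x.2.1 < y.2.1 ∨ (x.2.1 = y.2.1 ∧ x.2.2 ≤ y.2.2)))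

/-- The triple `(|C_k| − |C_1|, b, Σ_{V ∈ 𝒯} |V*|)` associated with a colouring `f` and a
choice `𝒯` of the set of classes `𝒯`. -/
noncomputable def tripleOf (G : SimpleGraph V) (d : ℕ) {k : ℕ} (f : V → Fin k)
    (𝒯 : Finset (Fin k)) : ℕ × ℕ × ℕ :=
  (maxS f - minS f, (Bset G d f).card, sumT G d f 𝒯)

/-- The near-equitable `d`-degenerate colouring `f` (with its associated set `𝒯f`) is
minimal: its triple `(|C_k| − |C_1|, b, Σ_{V ∈ 𝒯} |V*|)` is lexicographically smallest
among all near-equitable `d`-degenerate `k`-colourings of `G` with their associated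
choices of decomposition and `U_-`. -/
def MinimalNE (G : SimpleGraph V) (d : ℕ) {k : ℕ} (f : V → Fin k)
    (𝒯f : Finset (Fin k)) : Prop :=
  ∀ g : V → Fin k, IsDegenColoring G d g → NearEquitable (Fintype.card V) g →
    ∀ (q : ℕ) (hq : 0 < q) (𝒟 : Fin q → Finset (Fin k)) (trm : Fin q → Fin k),
      IsDecomp G d g 𝒟 trm →
      ∀ U : Fin k,
        IsUminus G d g (𝒟 ⟨q - 1, by omega⟩) (trm ⟨q - 1, by omega⟩) U →
        Lex3Le (tripleOf G d f 𝒯f)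
          (tripleOf G d g (TSet G d g (𝒟 ⟨q - 1, by omega⟩) (trm ⟨q - 1, by omega⟩) U))

/-- `G[S]` has an equitable `d`-degenerate `m`-colouring. -/
def HasEqDegenColOn (G : SimpleGraph V) (d : ℕ) (S : Finset V) (m : ℕ) : Prop :=
  ∃ g : V → Fin m,
    (∀ i, DegenOn G d (S.filter (fun v => g v = i))) ∧
    (∀ i j, (S.filter (fun v => g v = i)).card ≤ (S.filter (fun v => g v = j)).card + 1)

section Aux
variable {G : SimpleGraph V} {d k : ℕ}

lemma degenOn_subset {S T : Finset V} (h : DegenOn G d S) (hTS : T ⊆ S) : DegenOn G d T :=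
  fun s hs => h s (hs.trans hTS)

lemma degenOn_of_deleteEdges {u v : V} {S : Finset V} (h : u ∉ S ∨ v ∉ S)
    (hS : DegenOn (G.deleteEdges {s(u, v)}) d S) : DegenOn G d S := by
  intro s hs hne
  obtain ⟨w, hw, hcard⟩ := hS s hs hne
  refine ⟨w, hw, ?_⟩
  have hfe : s.filter (fun x => G.Adj w x)
      = s.filter (fun x => (G.deleteEdges {s(u, v)}).Adj w x) := by
    apply Finset.filter_congr
    intro x hx
    simp only [SimpleGraph.deleteEdges_adj, Set.mem_singleton_iff, eq_iff_iff]
    constructor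
    · intro ha
      refine ⟨ha, fun he => ?_⟩
      rw [Sym2.eq_iff] at he
      rcases he with ⟨rfl, rfl⟩ | ⟨rfl, rfl⟩
      · exact h.elim (fun h' => h' (hs hw)) (fun h' => h' (hs hx))
      · exact h.elim (fun h' => h' (hs hx)) (fun h' => h' (hs hw))
    · exact fun hb => hb.1
  rw [hfe]; convert hcard

lemma degenOn_insert {u : V} {S : Finset V} (hu : u ∉ S) (hS : DegenOn G d S)
    (hfd : (S.filter (fun x => G.Adj u x)).card ≤ d) : DegenOn G d (insert u S) := by
  intro s hs hne
  by_cases hus : u ∈ s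
  · refine ⟨u, hus, le_trans (card_le_card ?_) hfd⟩
    intro x hx
    rw [mem_filter] at hx ⊢
    refine ⟨?_, hx.2⟩
    have hxi := hs hx.1
    rw [mem_insert] at hxi
    rcases hxi with rfl | hxS
    · exact absurd hx.2 (G.loopless.irrefl x)
    · exact hxS
  · refine hS s (fun x hx => ?_) hne
    have hxi := hs hx
    rw [mem_insert] at hxi
    rcases hxi with rfl | hxS
    · exact absurd hx hus
    · exact hxS

lemma equitable_bounds {g : V → Fin k} (hk : 0 < k)
    (heq : ∀ i j, (cls g i).card ≤ (cls g j).card + 1) (i : Fin k) :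
    Fintype.card V / k ≤ (cls g i).card ∧
      (cls g i).card ≤ (Fintype.card V + k - 1) / k := by
  set n := Fintype.card V with hn
  have hsum : ∑ j : Fin k, (cls g j).card = n := by
    have h := Finset.card_eq_sum_card_fiberwise (s := (univ : Finset V))
      (t := (univ : Finset (Fin k))) (f := g) (fun x _ => mem_univ (g x))
    rw [Finset.card_univ] at h
    simpa [cls, hn] using h.symm
  have hsplit : (cls g i).card + ∑ j ∈ (univ : Finset (Fin k)).erase i, (cls g j).card = n := by
    rw [← hsum]
    exact Finset.add_sum_erase univ (fun j => (cls g j).card) (mem_univ i)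
  have hcard_erase : ((univ : Finset (Fin k)).erase i).card = k - 1 := by
    rw [Finset.card_erase_of_mem (mem_univ i), Finset.card_univ, Fintype.card_fin]
  have hkL : k * (n / k) ≤ n := Nat.mul_div_le n k
  have hnU : n ≤ k * ((n + k - 1) / k) := by
    have h1 := Nat.div_add_mod (n + k - 1) k
    have h2 := Nat.mod_lt (n + k - 1) hk
    generalize hM : k * ((n + k - 1) / k) = M at *
    omega
  constructor
  · by_contra hlt
    push_neg at hlt
    have hub : ∀ j ∈ (univ : Finset (Fin k)).erase i, (cls g j).card ≤ (cls g i).card + 1 :=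
      fun j _ => heq j i
    have hS : ∑ j ∈ (univ : Finset (Fin k)).erase i, (cls g j).card
        ≤ (k - 1) * ((cls g i).card + 1) := by
      calc ∑ j ∈ (univ : Finset (Fin k)).erase i, (cls g j).card
          ≤ ∑ _j ∈ (univ : Finset (Fin k)).erase i, ((cls g i).card + 1) :=
            Finset.sum_le_sum hub
        _ = (k - 1) * ((cls g i).card + 1) := by rw [Finset.sum_const, hcard_erase, smul_eq_mul]
    have hkk : k * ((cls g i).card + 1) ≤ k * (n / k) :=
      Nat.mul_le_mul_left k (by omega)
    have hx : n + 1 ≤ k * ((cls g i).card + 1) := by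
      have : k * ((cls g i).card + 1) = (cls g i).card + (k - 1) * ((cls g i).card + 1) + 1 := by
        cases k with
        | zero => omega
        | succ m => simp only [Nat.succ_sub_one]; ring
      omega
    omega
  · by_contra hlt
    push_neg at hlt
    set U := (n + k - 1) / k with hU
    have hlb : ∀ j ∈ (univ : Finset (Fin k)).erase i, U ≤ (cls g j).card := by
      intro j _
      have := heq i j
      omega
    have hS : (k - 1) * U ≤ ∑ j ∈ (univ : Finset (Fin k)).erase i, (cls g j).card := by
      calc (k - 1) * U = ∑ _j ∈ (univ : Finset (Fin k)).erase i, U := by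
            rw [Finset.sum_const, hcard_erase, smul_eq_mul]
        _ ≤ _ := Finset.sum_le_sum hlb
    have hx : k * U + 1 ≤ n := by
      have hh : k * U = (k - 1) * U + U := by
        cases k with
        | zero => omega
        | succ m => simp only [Nat.succ_sub_one]; ring
      omega
    omega

lemma ceil_le_floor_add_one (n : ℕ) (hk : 0 < k) :
    (n + k - 1) / k ≤ n / k + 1 := by
  have h1 : n + k - 1 ≤ n + k := by omega
  calc (n + k - 1) / k ≤ (n + k) / k := Nat.div_le_div_right h1
    _ = n / k + 1 := Nat.add_div_right n hk

end Aux

/-- **Lemma 2.2 (setting up).**  Let `Δ, d, k` be positive integers with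
`(d+1)k ≥ Δ + 1`, let `G` be a graph with maximum degree at most `Δ`, and let `uv` be an
edge of `G`.  If `G − uv` has an equitable `d`-degenerate `k`-colouring but `G` does not,
then `G` has a near-equitable `d`-degenerate `k`-colouring. -/
theorem near_equitable_of_delete_edge (Δ d k : ℕ) (hΔ : 0 < Δ) (hd : 0 < d) (hk : 0 < k)
    (hΔk : Δ + 1 ≤ (d + 1) * k)
    (G : SimpleGraph V)
    (hdeg : ∀ v : V, (Finset.univ.filter (fun u => G.Adj v u)).card ≤ Δ)
    (u v : V) (huv : G.Adj u v)
    (hminus : ∃ g : V → Fin k,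
      IsDegenColoring (G.deleteEdges {s(u, v)}) d g ∧ IsEquitable g)
    (hnoeq : ¬ ∃ g : V → Fin k, IsDegenColoring G d g ∧ IsEquitable g) :
    ∃ g : V → Fin k, IsDegenColoring G d g ∧ NearEquitable (Fintype.card V) g := by
  obtain ⟨g, hg, heqg⟩ := hminus
  have hneuv : u ≠ v := G.ne_of_adj huv
  -- Step 1: g u = g v, otherwise g works for G, contradiction
  have hguv : g u = g v := by
    by_contra hne
    refine absurd ⟨g, fun i => degenOn_of_deleteEdges ?_ (hg i), heqg⟩ hnoeq
    by_cases hu : g u = i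
    · right; simp only [cls, mem_filter, mem_univ, true_and]
      rw [← hu]; exact fun h => hne h.symm
    · left; simp only [cls, mem_filter, mem_univ, true_and]; exact hu
  -- Step 2: pigeonhole, some class has ≤ d neighbours of u
  have hpigeon : ∃ i : Fin k, ((cls g i).filter (fun x => G.Adj u x)).card ≤ d := by
    by_contra hcon
    push_neg at hcon
    have hfib := Finset.card_eq_sum_card_fiberwise
      (s := univ.filter (fun x => G.Adj u x)) (t := (univ : Finset (Fin k)))
      (f := g) (fun x _ => mem_univ (g x))
    have hswap : ∀ i : Fin k, ((univ.filter (fun x => G.Adj u x)).filter (fun x => g x = i))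
        = (cls g i).filter (fun x => G.Adj u x) := by
      intro i; ext x; simp [cls]; tauto
    have hge : (d + 1) * k ≤ (univ.filter (fun x => G.Adj u x)).card := by
      rw [hfib]
      calc (d + 1) * k = ∑ _i : Fin k, (d + 1) := by
            rw [Finset.sum_const, Finset.card_univ, Fintype.card_fin, smul_eq_mul, mul_comm]
        _ ≤ _ := Finset.sum_le_sum (fun i _ => by rw [hswap i]; exact hcon i)
    have := hdeg u
    omega
  obtain ⟨j, hjd⟩ := hpigeon
  -- Step 3: if j = g u then g works for G, contradiction
  have hjgu : j ≠ g u := by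
    rintro rfl
    refine absurd ⟨g, fun i => ?_, heqg⟩ hnoeq
    by_cases hi : i = g u
    · subst hi
      have hu_mem : u ∈ cls g (g u) := by simp [cls]
      have h1 : DegenOn G d (insert u ((cls g (g u)).erase u)) := by
        refine degenOn_insert (notMem_erase u _) ?_ ?_
        · exact degenOn_of_deleteEdges (Or.inl (notMem_erase u _))
            (degenOn_subset (hg (g u)) (erase_subset _ _))
        · exact le_trans (card_le_card (filter_subset_filter _ (erase_subset _ _))) hjd
      rwa [Finset.insert_erase hu_mem] at h1
    · refine degenOn_of_deleteEdges (Or.inl ?_) (hg i)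
      simp [cls]; exact fun h => hi h.symm
  -- Step 4: the moved colouring
  set g' : V → Fin k := Function.update g u j with hg'
  have hg'u : g' u = j := Function.update_self u j g
  have hg'x : ∀ x, x ≠ u → g' x = g x := fun x hx => Function.update_of_ne hx j g
  have hclsj : cls g' j = insert u (cls g j) := by
    ext x
    by_cases hx : x = u
    · subst hx; simp [cls, hg'u]
    · simp [cls, hg'x x hx, hx]
  have hclsne : ∀ i, i ≠ j → cls g' i = (cls g i).erase u := by
    intro i hi
    ext x
    by_cases hx : x = u
    · subst hx; simp [cls, hg'u]; exact fun h => hi h.symm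
    · simp [cls, hg'x x hx, hx]
  have hunotj : u ∉ cls g j := by simp [cls]; exact fun h => hjgu h.symm
  have hvnotj : v ∉ cls g j := by simp [cls, ← hguv]; exact fun h => hjgu h.symm
  -- g' is a d-degenerate colouring of G
  have hdc : IsDegenColoring G d g' := by
    intro i
    by_cases hij : i = j
    · rw [hij, hclsj]
      refine degenOn_insert hunotj ?_ hjd
      exact degenOn_of_deleteEdges (Or.inr hvnotj) (hg j)
    · rw [hclsne i hij]
      exact degenOn_of_deleteEdges (Or.inl (notMem_erase u _))
        (degenOn_subset (hg i) (erase_subset _ _))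
  -- if g' were equitable we'd contradict hnoeq
  have hneq' : ¬ IsEquitable g' := fun h => hnoeq ⟨g', hdc, h⟩
  -- size bookkeeping
  set n := Fintype.card V with hn
  set L := n / k with hL
  set U := (n + k - 1) / k with hU
  have hbounds : ∀ i, L ≤ (cls g i).card ∧ (cls g i).card ≤ U :=
    equitable_bounds hk heqg
  have hUL : U ≤ L + 1 := ceil_le_floor_add_one n hk
  have hLU : L ≤ U := Nat.div_le_div_right (by omega)
  have humem : u ∈ cls g (g u) := by simp [cls]
  have hc1 : 1 ≤ (cls g (g u)).card := card_pos.mpr ⟨u, humem⟩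
  have hcgu : (cls g' (g u)).card = (cls g (g u)).card - 1 := by
    rw [hclsne (g u) (Ne.symm hjgu), card_erase_of_mem humem]
  have hcj : (cls g' j).card = (cls g j).card + 1 := by
    rw [hclsj, card_insert_of_notMem hunotj]
  have hcoth : ∀ i, i ≠ g u → i ≠ j → (cls g' i).card = (cls g i).card := by
    intro i h1 h2
    rw [hclsne i h2, Finset.erase_eq_of_notMem]
    simp [cls]; exact fun h => h1 h.symm
  have hall : ∀ i, L - 1 ≤ (cls g' i).card ∧ (cls g' i).card ≤ U + 1 := by
    intro i
    by_cases h1 : i = g u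
    · have hb := hbounds (g u); rw [h1, hcgu]; omega
    · by_cases h2 : i = j
      · have hb := hbounds j; rw [h2, hcj]; omega
      · rw [hcoth i h1 h2]; have := hbounds i; omega
  refine ⟨g', hdc, ?_, ?_, ?_, ?_, ?_, ?_, ?_⟩
  · intro i; exact hall i
  · refine le_trans (card_le_card ?_) (card_singleton (g u)).le
    intro i hi
    rw [mem_filter] at hi
    rw [mem_singleton]
    by_contra h1
    by_cases h2 : i = j
    · rw [h2, hcj] at hi; have := hbounds j; omega
    · rw [hcoth i h1 h2] at hi; have := hbounds i; omega
  · refine le_trans (card_le_card ?_) (card_singleton j).le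
    intro i hi
    rw [mem_filter] at hi
    rw [mem_singleton]
    by_contra h2
    by_cases h1 : i = g u
    · rw [h1, hcgu] at hi; have := hbounds (g u); omega
    · rw [hcoth i h1 h2] at hi; have := hbounds i; omega
  · exact ⟨g u, by have := hbounds (g u); omega⟩
  · exact ⟨j, by have := hbounds j; omega⟩
  · rw [IsEquitable] at hneq'
    push_neg at hneq'
    obtain ⟨i1, j1, hij⟩ := hneq'
    exact ⟨j1, i1, by omega⟩
  · intro i1 j1
    have h1 := hall i1
    have h2 := hall j1
    omega
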